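/- In a deterministic transition system run on a certificate stream, if the collective configuration of a set 𝒱 of machines at certificate position j equals that at an earlier position i (with the consumed certificate segment s between them), then feeding the eventually-periodic certificate p·s^∞ (where p is the prefix up to position j) causes every machine in 𝒱 to run forever. -/

import Mathlib

/-- The run of a deterministic machine (step function `step`, returning `none`
when the machine halts) on a certificate stream `cert`, as an `Option`-valued
sequence of configurations. -/
def runStream {K Λ : Type} (step : K → Λ → Option K) (init : K)
    (cert : ℕ → Λ) : ℕ → Option K
  | 0 => some init
  | n + 1 => (runStream step init cert n).bind fun c => step c (cert n)

lemma runStream_eq_foldlM {K Λ : Type} (step : K → Λ → Option K) (init : K)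
    (cert : ℕ → Λ) (n : ℕ) :
    runStream step init cert n
      = ((List.range n).map cert).foldlM (m := Option) step init := by
  induction n with
  | zero => rfl
  | succ n ih =>
    rw [List.range_succ, List.map_append, List.foldlM_append]
    simp only [runStream, ih, List.map_cons, List.map_nil]
    cases ((List.range n).map cert).foldlM (m := Option) step init <;> simp

lemma foldlM_prefix_isSome {K Λ : Type} (step : K → Λ → Option K) (init : K)
    (l₁ l₂ : List Λ) (h : (List.foldlM (m := Option) step init (l₁ ++ l₂)).isSome) :
    (List.foldlM (m := Option) step init l₁).isSome := by
  rw [List.foldlM_append] at h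
  cases hx : List.foldlM (m := Option) step init l₁ <;> simp [hx] at h ⊢

/-- If every machine `i` of a collection `𝒱`, run deterministically on the
certificate prefix `p`, reaches configuration `c i`, and consuming the segment
`s` from `c i` returns it to `c i` (the collective configuration repeats),
then on the eventually-periodic certificate `p · s^∞` every machine in `𝒱`
runs forever (its run is defined at every step). -/
theorem stmt13 (ι : Type) (Λ : Type) (F : ι → Type)
    (step : ∀ i, F i → Λ → Option (F i)) (init : ∀ i, F i)
    (p s : List Λ) (hs : s ≠ [])
    (c : ∀ i, F i)
    (hp : ∀ i, p.foldlM (m := Option) (step i) (init i) = some (c i))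
    (hcyc : ∀ i, s.foldlM (m := Option) (step i) (c i) = some (c i)) :
    ∀ (i : ι) (n : ℕ),
      (runStream (step i) (init i)
        (fun j => if h : j < p.length then p.get ⟨j, h⟩
          else s.get ⟨(j - p.length) % s.length,
            Nat.mod_lt _ (List.length_pos_iff.mpr hs)⟩) n).isSome := by
  intro i n
  set cert : ℕ → Λ := fun j => if h : j < p.length then p.get ⟨j, h⟩
    else s.get ⟨(j - p.length) % s.length,
      Nat.mod_lt _ (List.length_pos_iff.mpr hs)⟩ with hcert
  have hslen : 0 < s.length := List.length_pos_iff.mpr hs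
  -- the prefix of the stream of length p.length is p
  have hbase : (List.range p.length).map cert = p := by
    apply List.ext_getElem
    · simp
    · intro j h1 h2
      simp only [List.getElem_map, List.getElem_range, hcert]
      rw [dif_pos h2]
      rfl
  -- each subsequent block of length s.length is s
  have hblock : ∀ t : ℕ,
      (List.range s.length).map (fun k => cert (p.length + t * s.length + k)) = s := by
    intro t
    apply List.ext_getElem
    · simp
    · intro j h1 h2
      simp only [List.getElem_map, List.getElem_range, hcert]
      rw [dif_neg (by omega)]
      have h3 : p.length + t * s.length + j - p.length = t * s.length + j := by omega
      have hidx : (p.length + t * s.length + j - p.length) % s.length = j := by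
        rw [h3, Nat.mul_comm, Nat.mul_add_mod, Nat.mod_eq_of_lt h2]
      simp only [hidx, List.get_eq_getElem]
  -- after p followed by t copies of s, the machine is at c i
  have key : ∀ t : ℕ,
      ((List.range (p.length + t * s.length)).map cert).foldlM (m := Option)
        (step i) (init i) = some (c i) := by
    intro t
    induction t with
    | zero => simpa [hbase] using hp i
    | succ t ih =>
      have harr : p.length + (t + 1) * s.length
          = (p.length + t * s.length) + s.length := by ring
      rw [harr, List.range_add, List.map_append, List.foldlM_append, ih]
      have : (List.map cert (List.map (fun x => p.length + t * s.length + x)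
          (List.range s.length))) = s := by
        rw [List.map_map]; exact hblock t
      simp [this, hcyc i]
  -- now conclude: range n is a prefix of range (p.length + n * s.length)
  rw [runStream_eq_foldlM]
  have hle : n ≤ p.length + n * s.length := by
    calc n = n * 1 := (Nat.mul_one n).symm
    _ ≤ n * s.length := Nat.mul_le_mul_left n hslen
    _ ≤ p.length + n * s.length := Nat.le_add_left _ _
  obtain ⟨m, hm⟩ := Nat.exists_eq_add_of_le hle
  apply foldlM_prefix_isSome (step i) (init i) _
    ((List.map (fun x => n + x) (List.range m)).map cert)
  rw [← List.map_append, ← List.range_add, ← hm, key n]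
  rfl
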